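/- Let f₁,…,f_k be quality functions on (dataset, distribution) pairs, each with robust sensitivity at most Δ at scale ζ. The Weighted Return Noisy Max mechanism, which adds i.i.d. Laplace(1/η) noise Z_i to each f_i and outputs argmax_i (f_i + Z_i), satisfies: for neighboring datasets S ∼ S', distributions μ, μ' with d(μ,μ') < ζ, and every index i, Pr[WRNM(S,μ) = i] ≤ exp(2ηΔ)·Pr[WRNM(S',μ') = i]. -/

import Mathlib

open MeasureTheory in
/-- Privacy of Weighted Return Noisy Max: with i.i.d. Laplace(1/η) noise added to k
    quality functions of robust sensitivity ≤ Δ at scale ζ, for neighboring datasets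
    S ∼ S' and distributions μ, μ' with d(μ,μ') < ζ, the probability that index i is
    the noisy argmax changes by at most a factor exp(2ηΔ). -/
theorem weighted_return_noisy_max_privacy
    {Dataset Dist : Type*} (neighbor : Dataset → Dataset → Prop)
    (tv : Dist → Dist → ℝ) {k : ℕ}
    (f : Fin k → Dataset → Dist → ℝ) (Δ ζ η : ℝ) (hη : 0 < η)
    (hsens : ∀ i, ∀ S S', neighbor S S' → ∀ μ μ', tv μ μ' < ζ →
      |f i S μ - f i S' μ'| ≤ Δ)
    (S S' : Dataset) (hSS' : neighbor S S')
    (μ μ' : Dist) (hμμ' : tv μ μ' < ζ) (i : Fin k) :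
    (volume.withDensity
        (fun z : Fin k → ℝ => ENNReal.ofReal (∏ j, η / 2 * Real.exp (-η * |z j|))))
      {z | ∀ j, j ≠ i → f j S μ + z j < f i S μ + z i}
    ≤ ENNReal.ofReal (Real.exp (2 * η * Δ)) *
      (volume.withDensity
          (fun z : Fin k → ℝ => ENNReal.ofReal (∏ j, η / 2 * Real.exp (-η * |z j|))))
        {z | ∀ j, j ≠ i → f j S' μ' + z j < f i S' μ' + z i} := by
  have hΔ : 0 ≤ Δ := le_trans (abs_nonneg _) (hsens i S S' hSS' μ μ' hμμ')
  set ρ : (Fin k → ℝ) → ENNReal :=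
    fun z => ENNReal.ofReal (∏ j, η / 2 * Real.exp (-η * |z j|)) with hρ
  set c : Fin k → ℝ := fun j => if j = i then 2 * Δ else 0 with hc
  set A : Set (Fin k → ℝ) := {z | ∀ j, j ≠ i → f j S μ + z j < f i S μ + z i} with hA
  set A' : Set (Fin k → ℝ) := {z | ∀ j, j ≠ i → f j S' μ' + z j < f i S' μ' + z i} with hA'
  have hmeas : ∀ g : Fin k → ℝ,
      MeasurableSet {z : Fin k → ℝ | ∀ j, j ≠ i → g j + z j < g i + z i} := by
    intro g
    have : {z : Fin k → ℝ | ∀ j, j ≠ i → g j + z j < g i + z i}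
        = ⋂ j, ⋂ (_ : j ≠ i), {z : Fin k → ℝ | g j + z j < g i + z i} := by
      ext z; simp [Set.mem_iInter]
    rw [this]
    exact MeasurableSet.iInter fun j => MeasurableSet.iInter fun _ =>
      measurableSet_lt (measurable_const.add (measurable_pi_apply j))
        (measurable_const.add (measurable_pi_apply i))
  -- pointwise density bound
  have hdens : ∀ z : Fin k → ℝ,
      ρ (z + (-c)) ≤ ENNReal.ofReal (Real.exp (2 * η * Δ)) * ρ z := by
    intro z
    rw [hρ]
    simp only
    rw [← ENNReal.ofReal_mul (Real.exp_nonneg _)]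
    apply ENNReal.ofReal_le_ofReal
    have hterm : ∀ j ∈ Finset.univ.erase i,
        η / 2 * Real.exp (-η * |(z + (-c)) j|) = η / 2 * Real.exp (-η * |z j|) := by
      intro j hj
      have hji : j ≠ i := Finset.ne_of_mem_erase hj
      simp [hc, hji]
    rw [← Finset.mul_prod_erase Finset.univ
        (fun j => η / 2 * Real.exp (-η * |(z + (-c)) j|)) (Finset.mem_univ i),
      ← Finset.mul_prod_erase Finset.univ
        (fun j => η / 2 * Real.exp (-η * |z j|)) (Finset.mem_univ i),
      Finset.prod_congr rfl hterm, ← mul_assoc]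
    have hprodnn : 0 ≤ ∏ j ∈ Finset.univ.erase i, η / 2 * Real.exp (-η * |z j|) :=
      Finset.prod_nonneg fun j _ => mul_nonneg (by positivity) (Real.exp_nonneg _)
    apply mul_le_mul_of_nonneg_right _ hprodnn
    have hci : (z + (-c)) i = z i - 2 * Δ := by simp [hc, sub_eq_add_neg]
    rw [hci]
    have habs : |z i| - |z i - 2 * Δ| ≤ 2 * Δ := by
      have := abs_sub_abs_le_abs_sub (z i) (z i - 2 * Δ)
      have h2 : |z i - (z i - 2 * Δ)| = 2 * Δ := by
        rw [show z i - (z i - 2 * Δ) = 2 * Δ by ring, abs_of_nonneg (by linarith)]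
      linarith
    have hexp : Real.exp (-η * |z i - 2 * Δ|)
        ≤ Real.exp (2 * η * Δ) * Real.exp (-η * |z i|) := by
      rw [← Real.exp_add]
      apply Real.exp_le_exp.mpr
      nlinarith [hη.le]
    calc η / 2 * Real.exp (-η * |z i - 2 * Δ|)
        ≤ η / 2 * (Real.exp (2 * η * Δ) * Real.exp (-η * |z i|)) := by
          apply mul_le_mul_of_nonneg_left hexp (by positivity)
      _ = Real.exp (2 * η * Δ) * (η / 2 * Real.exp (-η * |z i|)) := by ring
  -- shift inclusion
  have hshift : ∀ z : Fin k → ℝ, z + (-c) ∈ A → z ∈ A' := by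
    intro z hz j hji
    have h1 := hz j hji
    change f j S μ + (z + (-c)) j < f i S μ + (z + (-c)) i at h1
    have hzj : (z + (-c)) j = z j := by simp [hc, hji]
    have hzi : (z + (-c)) i = z i - 2 * Δ := by simp [hc, sub_eq_add_neg]
    rw [hzj, hzi] at h1
    have hsj := abs_le.mp (hsens j S S' hSS' μ μ' hμμ')
    have hsi := abs_le.mp (hsens i S S' hSS' μ μ' hμμ')
    show f j S' μ' + z j < f i S' μ' + z i
    linarith [hsj.1, hsj.2, hsi.1, hsi.2]
  -- assemble
  have hmA : MeasurableSet A := hmeas (fun j => f j S μ)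
  have hmA' : MeasurableSet A' := hmeas (fun j => f j S' μ')
  rw [withDensity_apply _ hmA, withDensity_apply _ hmA',
    ← lintegral_indicator hmA ρ, ← lintegral_indicator hmA' ρ]
  calc ∫⁻ z, A.indicator ρ z ∂volume
      = ∫⁻ z, A.indicator ρ (z + (-c)) ∂volume :=
        (lintegral_add_right_eq_self (fun z => A.indicator ρ z) (-c)).symm
    _ ≤ ∫⁻ z, A'.indicator (fun z => ENNReal.ofReal (Real.exp (2 * η * Δ)) * ρ z) z
          ∂volume := by
        apply lintegral_mono
        intro z
        show A.indicator ρ (z + -c) ≤ A'.indicator (fun z => ENNReal.ofReal (Real.exp (2 * η * Δ)) * ρ z) z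
        by_cases hz : z + (-c) ∈ A
        · rw [Set.indicator_of_mem hz, Set.indicator_of_mem (hshift z hz)]
          exact hdens z
        · rw [Set.indicator_of_notMem hz]
          exact zero_le
    _ = ENNReal.ofReal (Real.exp (2 * η * Δ)) * ∫⁻ z, A'.indicator ρ z ∂volume := by
        rw [← lintegral_const_mul' _ _ ENNReal.ofReal_ne_top]
        congr 1
        ext z
        by_cases hz : z ∈ A'
        · rw [Set.indicator_of_mem hz, Set.indicator_of_mem hz]
        · rw [Set.indicator_of_notMem hz, Set.indicator_of_notMem hz, mul_zero]
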